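/- Let (X,·) be a quasigroup satisfying the identity D24: x·((y·z)·x) = (x·(y·z))·x for all x,y,z ∈ X, and let n be any integer. Let ∂₂ : ℤ[X × X] → ℤ[X] be the group homomorphism determined by ∂₂(a,b) = n·a + n·b − a·b (the substitution t = s = n), and for x,y,z ∈ X set ∂₃(x,y,z) = n·(yz,x) + (x,(yz)x) − n·(x,yz) − (x(yz),x) ∈ ℤ[X × X]. Then ∂₂(∂₃(x,y,z)) = 0 for all x,y,z ∈ X. -/
import Mathlib


open FreeAbelianGroup

/-- For a quasigroup satisfying the identity D24 and any integer `n`, the boundary maps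
`∂₂(a,b) = n·a + n·b − ab` (substitution `t = s = n`) and the D24 boundary `∂₃`
compose to zero: `∂₂ ∘ ∂₃ = 0`. -/
theorem D24_boundary_squared_zero {X : Type*} [Mul X]
    (hl : ∀ a b : X, ∃! x : X, a * x = b)
    (hr : ∀ a b : X, ∃! y : X, y * a = b)
    (hD24 : ∀ x y z : X, x * ((y * z) * x) = (x * (y * z)) * x)
    (n : ℤ)
    (d2 : FreeAbelianGroup (X × X) →+ FreeAbelianGroup X)
    (hd2 : ∀ a b : X, d2 (of (a, b)) = n • of a + n • of b - of (a * b)) :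
    ∀ x y z : X,
      d2 (n • of (y * z, x) + of (x, (y * z) * x)
          - n • of (x, y * z) - of (x * (y * z), x)) = 0 := by
  intro x y z
  simp only [map_add, map_sub, map_zsmul, hd2, hD24 x y z]
  module
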